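/- arXiv:1311.5739 — 2 statements merged into one kernel-verified Lean document; each statement's English description precedes it below -/
import Mathlib

section
/- (Lemma 4) With the setup of Section 4 (genus g > 0, distinct rational places P₁, …, P_s, P_∞, positive divisor D of degree 2g with supp(D) ∩ {P_∞, P₂, …, P_s} = ∅, elements β_j^{(i)} chosen as in Lemma 3, and w₁, …, w_g a basis of L(D − P₁) with ν_{P_∞}(w_f) = n_f pairwise distinct, ν_{P₁}(w_f) ≥ 1 − ν_{P₁}(D), ν_{P_i}(w_f) ≥ 0 for 2 ≤ i ≤ s), the system {w₁, …, w_g} ∪ {β_j^{(i)} : 1 ≤ i ≤ s, j ≥ 1} is linearly independent over F_q. -/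
open scoped BigOperators

/-- An algebraic function field `F` of one variable over the full constant field `K`,
presented through the set of its places: each place `P` has a normalized discrete
valuation `v P` (its value on `0` is irrelevant/junk) and a degree `deg P ≥ 1`.
The axioms are the standard facts: multiplicativity and the ultrametric inequality of
valuations, triviality on constants, finiteness of the support of a principal divisor,
the degree formula `deg(div f) = 0`, the full-constant-field property, and the fact
that places of degree one have residue field `K`. -/
structure FFPlaces (K F : Type*) [Field K] [Field F] [Algebra K F] where
  Place : Type
  v : Place → F → ℤ
  deg : Place → ℕ
  deg_pos : ∀ P, 0 < deg P
  v_mul : ∀ (P) (x y : F), x ≠ 0 → y ≠ 0 → v P (x * y) = v P x + v P y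
  v_add : ∀ (P) (x y : F), x ≠ 0 → y ≠ 0 → x + y ≠ 0 → min (v P x) (v P y) ≤ v P (x + y)
  v_algebraMap : ∀ (P) (c : K), c ≠ 0 → v P (algebraMap K F c) = 0
  finite_support : ∀ f : F, f ≠ 0 → {P | v P f ≠ 0}.Finite
  degree_formula : ∀ f : F, f ≠ 0 → (∑ᶠ P, (deg P : ℤ) * v P f) = 0
  full_constants : ∀ f : F, f ≠ 0 → (∀ P, 0 ≤ v P f) → ∃ c : K, f = algebraMap K F c
  residue_one : ∀ P, deg P = 1 → ∀ f g : F, f ≠ 0 → g ≠ 0 → v P f = v P g →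
      ∃ c : K, f = algebraMap K F c * g ∨ v P f < v P (f - algebraMap K F c * g)

namespace FFPlaces

variable {K F : Type*} [Field K] [Field F] [Algebra K F]

/-- The degree of a divisor (a finitely supported `ℤ`-valued function on places). -/
def degD (FF : FFPlaces K F) (D : FF.Place →₀ ℤ) : ℤ :=
  ∑ P ∈ D.support, (FF.deg P : ℤ) * D P

/-- The Riemann–Roch space `L(D) = {f ∈ F* : div f + D ≥ 0} ∪ {0}` of a divisor `D`,
as a `K`-subspace of `F`. -/
def RR (FF : FFPlaces K F) (D : FF.Place →₀ ℤ) : Submodule K F where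
  carrier := {f | f = 0 ∨ ∀ P, -(D P) ≤ FF.v P f}
  zero_mem' := Or.inl rfl
  add_mem' := by
    intro a b ha hb
    simp only [Set.mem_setOf_eq] at *
    by_cases ha0 : a = 0
    · simpa [ha0] using hb
    by_cases hb0 : b = 0
    · simpa [hb0] using ha
    by_cases hab : a + b = 0
    · exact Or.inl hab
    have ha' := ha.resolve_left ha0
    have hb' := hb.resolve_left hb0
    exact Or.inr fun P =>
      le_trans (le_min (ha' P) (hb' P)) (FF.v_add P a b ha0 hb0 hab)
  smul_mem' := by
    intro c x hx
    simp only [Set.mem_setOf_eq] at *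
    by_cases hc : c = 0
    · left; simp [hc]
    by_cases hx0 : x = 0
    · left; simp [hx0]
    have hx' := hx.resolve_left hx0
    have halg : algebraMap K F c ≠ 0 :=
      (map_ne_zero_iff (algebraMap K F) (RingHom.injective _)).mpr hc
    refine Or.inr fun P => ?_
    rw [Algebra.smul_def, FF.v_mul P _ x halg hx0, FF.v_algebraMap P c hc]
    simpa using hx' P

end FFPlaces

namespace FFPlaces

variable {K F : Type*} [Field K] [Field F] [Algebra K F] (FF : FFPlaces K F)

lemma v_one' (P : FF.Place) : FF.v P (1 : F) = 0 := by
  have := FF.v_algebraMap P 1 one_ne_zero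
  simpa using this

lemma v_neg' (P : FF.Place) (x : F) (hx : x ≠ 0) : FF.v P (-x) = FF.v P x := by
  have hm1 : FF.v P (-1 : F) = 0 := by
    have h := FF.v_mul P (-1) (-1) (by norm_num) (by norm_num)
    simp only [neg_mul, one_mul, neg_neg] at h
    rw [FF.v_one'] at h
    omega
  have h := FF.v_mul P (-1) x (by norm_num) hx
  rw [hm1, zero_add] at h
  simpa using h

lemma v_smul' (P : FF.Place) (c : K) (hc : c ≠ 0) (x : F) (hx : x ≠ 0) :
    FF.v P (c • x) = FF.v P x := by
  have halg : algebraMap K F c ≠ 0 :=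
    (map_ne_zero_iff (algebraMap K F) (RingHom.injective _)).mpr hc
  rw [Algebra.smul_def, FF.v_mul P _ x halg hx, FF.v_algebraMap P c hc, zero_add]

lemma mem_RR_iff {A : FF.Place →₀ ℤ} {f : F} :
    f ∈ FF.RR A ↔ f = 0 ∨ ∀ P, -(A P) ≤ FF.v P f := Iff.rfl

lemma v_sum_aux (P : FF.Place) (m : ℤ) {ι : Type*} (t : Finset ι) (a : ι → F)
    (h : ∀ i ∈ t, a i ≠ 0 → m < FF.v P (a i)) :
    (∑ i ∈ t, a i) = 0 ∨ ((∑ i ∈ t, a i) ≠ 0 ∧ m < FF.v P (∑ i ∈ t, a i)) := by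
  classical
  induction t using Finset.induction_on with
  | empty => simp
  | @insert i s his ih =>
    rw [Finset.sum_insert his]
    have ih' := ih (fun j hj => h j (Finset.mem_insert_of_mem hj))
    by_cases hai : a i = 0
    · rw [hai, zero_add]; exact ih'
    · have hi' := h i (Finset.mem_insert_self i s) hai
      rcases ih' with hS | hS
      · rw [hS, add_zero]; exact Or.inr ⟨hai, hi'⟩
      · by_cases hsum : a i + ∑ j ∈ s, a j = 0
        · exact Or.inl hsum
        · refine Or.inr ⟨hsum, lt_of_lt_of_le ?_ (FF.v_add P _ _ hai hS.1 hsum)⟩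
          exact lt_min hi' hS.2

lemma sum_ne_zero' (P : FF.Place) {ι : Type*} (t : Finset ι) (a : ι → F) (i₀ : ι)
    (hi₀ : i₀ ∈ t) (h0 : a i₀ ≠ 0)
    (h : ∀ i ∈ t, i ≠ i₀ → a i ≠ 0 → FF.v P (a i₀) < FF.v P (a i)) :
    (∑ i ∈ t, a i) ≠ 0 := by
  classical
  rw [← Finset.add_sum_erase t a hi₀]
  intro hz
  rcases FF.v_sum_aux P (FF.v P (a i₀)) (t.erase i₀) a
      (fun j hj hja => h j (Finset.mem_of_mem_erase hj) (Finset.ne_of_mem_erase hj) hja)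
    with hS | hS
  · rw [hS, add_zero] at hz; exact h0 hz
  · have hEq : ∑ j ∈ t.erase i₀, a j = -a i₀ := eq_neg_of_add_eq_zero_right hz
    rw [hEq, FF.v_neg' P _ h0] at hS
    exact lt_irrefl _ hS.2

end FFPlaces

open Finsupp in
/-- Lemma 4 of the paper. With the setup of Section 4 — genus `g > 0`, distinct rational
places `P 0, …, P (s-1), Pinf` (the paper's `P₁, …, P_s, P_∞`), a positive divisor `D` of
degree `2g` with support avoiding `Pinf, P₂, …, P_s`, elements `β_j^{(i)}` chosen as in
Lemma 3, and `w₁, …, w_g` a basis of `L(D - P₁)` with pairwise distinct valuations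
`ν_{Pinf}(w_f) = n_f` — the system `{w₁, …, w_g} ∪ {β_j^{(i)} : 1 ≤ i ≤ s, j ≥ 1}` is
linearly independent over `Fq`. -/
theorem lemma4_linearIndependent (Fq F : Type*) [Field Fq] [Fintype Fq] [Field F]
    [Algebra Fq F] (FF : FFPlaces Fq F) (g : ℕ) (hg : 0 < g)
    (hRR : ∀ D : FF.Place →₀ ℤ, 2 * (g : ℤ) - 1 ≤ FF.degD D →
      (Module.finrank Fq (FF.RR D) : ℤ) = FF.degD D + 1 - g)
    (s : ℕ) [NeZero s] (hs2 : 2 ≤ s) (P : Fin s → FF.Place)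
    (hP : Function.Injective P) (hPdeg : ∀ i, FF.deg (P i) = 1)
    (Pinf : FF.Place) (hPinfdeg : FF.deg Pinf = 1) (hPinfne : ∀ i, Pinf ≠ P i)
    (D : FF.Place →₀ ℤ) (hDpos : ∀ Q, 0 ≤ D Q) (hdegD : FF.degD D = 2 * g)
    (hDsupp : ∀ i : Fin s, i ≠ 0 → D (P i) = 0) (hDsuppInf : D Pinf = 0)
    (β : Fin s → ℕ → F)
    (hβ1 : ∀ j : ℕ, 1 ≤ j →
      β 0 j ∈ FF.RR (D + single (P 0) ((j : ℤ) - 1) - single (P 1) ((j : ℤ) - 1)) ∧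
      β 0 j ∉ FF.RR (D + single (P 0) ((j : ℤ) - 2) - single (P 1) ((j : ℤ) - 1)))
    (hβi : ∀ i : Fin s, i ≠ 0 → ∀ j : ℕ, 1 ≤ j →
      β i j ∈ FF.RR (D + single (P i) (j : ℤ) - single (P 0) (j : ℤ)) ∧
      β i j ∉ FF.RR (D + single (P i) (j : ℤ) - single (P 0) ((j : ℤ) + 1)) ∧
      β i j ∉ FF.RR (D + single (P i) ((j : ℤ) - 1) - single (P 0) (j : ℤ)))
    (w : Fin g → F) (hwmem : ∀ f, w f ∈ FF.RR (D - single (P 0) 1))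
    (hwli : LinearIndependent Fq w)
    (hwspan : Submodule.span Fq (Set.range w) = FF.RR (D - single (P 0) 1))
    (n : Fin g → ℕ) (hn : ∀ f, FF.v Pinf (w f) = (n f : ℤ))
    (hninj : Function.Injective n)
    (hw1 : ∀ f, 1 - D (P 0) ≤ FF.v (P 0) (w f))
    (hwi : ∀ (i : Fin s), i ≠ 0 → ∀ f, 0 ≤ FF.v (P i) (w f)) :
    LinearIndependent Fq
      (Sum.elim w (fun p : Fin s × {j : ℕ // 1 ≤ j} => β p.1 p.2)) := by
  classical
  have h01 : (0 : Fin s) ≠ 1 := by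
    intro h
    have h1 : ((1 : Fin s) : ℕ) = 1 % s := rfl
    have := congrArg Fin.val h
    rw [h1, Nat.mod_eq_of_lt (by omega : 1 < s)] at this
    simp at this
  have hPne : ∀ i i' : Fin s, i ≠ i' → P i ≠ P i' := fun i i' h hh => h (hP hh)
  -- exact valuation of β 0 j at P 0
  have hβ0 : ∀ j : ℕ, 1 ≤ j → β 0 j ≠ 0 ∧ FF.v (P 0) (β 0 j) = 1 - D (P 0) - j := by
    intro j hj
    obtain ⟨hmem, hnot⟩ := hβ1 j hj
    have hne : β 0 j ≠ 0 := fun h => hnot (h ▸ (FF.RR _).zero_mem)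
    refine ⟨hne, ?_⟩
    have hub := (FF.mem_RR_iff.mp hmem).resolve_left hne
    have h10 : P 1 ≠ P 0 := hPne 1 0 (Ne.symm h01)
    have hlow : -(D (P 0) + ((j : ℤ) - 1)) ≤ FF.v (P 0) (β 0 j) := by
      have := hub (P 0)
      simpa [Finsupp.single_apply, h10] using this
    have hupp : FF.v (P 0) (β 0 j) < -(D (P 0) + ((j : ℤ) - 2)) := by
      by_contra hcon
      push_neg at hcon
      apply hnot
      refine FF.mem_RR_iff.mpr (Or.inr fun Q => ?_)
      by_cases hQ : Q = P 0
      · subst hQ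
        simpa [Finsupp.single_apply, h10] using hcon
      · have hQ' : P 0 ≠ Q := Ne.symm hQ
        have := hub Q
        simpa [Finsupp.single_apply, hQ'] using this
    omega
  -- exact valuation of β i j at P i for i ≠ 0
  have hβiv : ∀ i : Fin s, i ≠ 0 → ∀ j : ℕ, 1 ≤ j →
      β i j ≠ 0 ∧ FF.v (P i) (β i j) = -(j : ℤ) := by
    intro i hi j hj
    obtain ⟨hmem, _, hnot⟩ := hβi i hi j hj
    have hne : β i j ≠ 0 := fun h => hnot (h ▸ (FF.RR _).zero_mem)
    refine ⟨hne, ?_⟩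
    have hub := (FF.mem_RR_iff.mp hmem).resolve_left hne
    have hi0 : P i ≠ P 0 := hPne i 0 hi
    have h0i : P 0 ≠ P i := hPne 0 i (Ne.symm hi)
    have hDi : D (P i) = 0 := hDsupp i hi
    have hlow : -((j : ℤ)) ≤ FF.v (P i) (β i j) := by
      have := hub (P i)
      simpa [Finsupp.single_apply, h0i, hDi] using this
    have hupp : FF.v (P i) (β i j) < -((j : ℤ) - 1) := by
      by_contra hcon
      push_neg at hcon
      apply hnot
      refine FF.mem_RR_iff.mpr (Or.inr fun Q => ?_)
      by_cases hQ : Q = P i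
      · subst hQ
        simpa [Finsupp.single_apply, h0i, hDi] using hcon
      · have hQ' : P i ≠ Q := Ne.symm hQ
        have := hub Q
        simpa [Finsupp.single_apply, hQ'] using this
    omega
  have hβne : ∀ p : Fin s × {j : ℕ // 1 ≤ j}, β p.1 (p.2 : ℕ) ≠ 0 := by
    intro p
    by_cases hp : p.1 = 0
    · rw [hp]; exact (hβ0 p.2 p.2.2).1
    · exact (hβiv p.1 hp p.2 p.2.2).1
  -- lower bound for β p at P 0 when p.1 ≠ 0
  have hβlow0 : ∀ p : Fin s × {j : ℕ // 1 ≤ j}, p.1 ≠ 0 →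
      1 - D (P 0) ≤ FF.v (P 0) (β p.1 (p.2 : ℕ)) := by
    intro p hp
    obtain ⟨hmem, _, _⟩ := hβi p.1 hp p.2 p.2.2
    have hub := (FF.mem_RR_iff.mp hmem).resolve_left (hβne p)
    have h1 : P p.1 ≠ P 0 := hPne _ _ hp
    have := hub (P 0)
    have hj1 : 1 ≤ (p.2 : ℕ) := p.2.2
    simp [Finsupp.single_apply, h1] at this
    omega
  -- lower bound for β p at P i when i ≠ 0, p.1 ≠ i
  have hβlowi : ∀ i : Fin s, i ≠ 0 → ∀ p : Fin s × {j : ℕ // 1 ≤ j}, p.1 ≠ i →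
      0 ≤ FF.v (P i) (β p.1 (p.2 : ℕ)) := by
    intro i hi p hp
    have hDi : D (P i) = 0 := hDsupp i hi
    have h0i : P 0 ≠ P i := hPne 0 i (Ne.symm hi)
    have hj1 : 1 ≤ (p.2 : ℕ) := p.2.2
    by_cases hp0 : p.1 = 0
    · obtain ⟨hmem, _⟩ := hβ1 p.2 p.2.2
      have hub := (FF.mem_RR_iff.mp hmem).resolve_left (by rw [← hp0]; exact hβne p)
      have := hub (P i)
      rw [hp0]
      by_cases h1i : (1 : Fin s) = i
      · subst h1i
        simp [Finsupp.single_apply, h0i] at this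
        omega
      · have h1i' : P 1 ≠ P i := hPne 1 i h1i
        simp [Finsupp.single_apply, h0i, h1i'] at this
        omega
    · obtain ⟨hmem, _, _⟩ := hβi p.1 hp0 p.2 p.2.2
      have hub := (FF.mem_RR_iff.mp hmem).resolve_left (hβne p)
      have hpi : P p.1 ≠ P i := hPne _ _ hp
      have := hub (P i)
      simp [Finsupp.single_apply, hpi, h0i] at this
      omega
  rw [linearIndependent_iff']
  intro t c hsum
  -- main step: kill the β coefficients
  have main : ∀ (i : Fin s) (Q : FF.Place) (e : ℤ),
      (∀ j : ℕ, 1 ≤ j → FF.v Q (β i j) = e - j) →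
      (∀ f₀ : Fin g, e ≤ FF.v Q (w f₀)) →
      (∀ p : Fin s × {j : ℕ // 1 ≤ j}, p.1 ≠ i → e ≤ FF.v Q (β p.1 (p.2 : ℕ))) →
      ∀ p : Fin s × {j : ℕ // 1 ≤ j}, p.1 = i → Sum.inr p ∈ t → c (Sum.inr p) = 0 := by
    intro i Q e hval hw hβo p hp1 hpt
    by_contra hc
    set W : (Fin g ⊕ Fin s × {j : ℕ // 1 ≤ j}) → F :=
      Sum.elim w (fun p : Fin s × {j : ℕ // 1 ≤ j} => β p.1 (p.2 : ℕ)) with hW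
    set a : (Fin g ⊕ Fin s × {j : ℕ // 1 ≤ j}) → F := fun x => c x • W x with ha
    set f : (Fin g ⊕ Fin s × {j : ℕ // 1 ≤ j}) → ℕ :=
      Sum.elim (fun _ => 0)
        (fun q => if q.1 = i ∧ c (Sum.inr q) ≠ 0 then (q.2 : ℕ) else 0) with hf
    have hfl : ∀ f₀ : Fin g, f (Sum.inl f₀) = 0 := fun _ => rfl
    have hfr : ∀ q : Fin s × {j : ℕ // 1 ≤ j},
        f (Sum.inr q) = if q.1 = i ∧ c (Sum.inr q) ≠ 0 then (q.2 : ℕ) else 0 :=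
      fun _ => rfl
    have hfp : f (Sum.inr p) = (p.2 : ℕ) := by rw [hfr]; exact if_pos ⟨hp1, hc⟩
    have hne : (t.image f).Nonempty := ⟨f (Sum.inr p), Finset.mem_image_of_mem f hpt⟩
    obtain ⟨x₀, hx₀t, hx₀f⟩ := Finset.mem_image.mp ((t.image f).max'_mem hne)
    have hmax : ∀ x ∈ t, f x ≤ f x₀ := by
      intro x hx
      rw [hx₀f]
      exact Finset.le_max' _ _ (Finset.mem_image_of_mem f hx)
    have hjm1 : 1 ≤ f x₀ := by
      have h' := hmax _ hpt
      rw [hfp] at h'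
      exact le_trans p.2.2 h'
    obtain ⟨q, rfl⟩ : ∃ q, x₀ = Sum.inr q := by
      cases x₀ with
      | inl f₀ => exfalso; rw [hfl] at hjm1; omega
      | inr q => exact ⟨q, rfl⟩
    have hq : q.1 = i ∧ c (Sum.inr q) ≠ 0 := by
      by_contra hqq
      rw [hfr, if_neg hqq] at hjm1
      omega
    have hq2 : (q.2 : ℕ) = f (Sum.inr q) := by rw [hfr]; exact (if_pos hq).symm
    have hβq : β q.1 (q.2 : ℕ) = β i (f (Sum.inr q)) := by rw [hq.1, hq2]
    have hWq : W (Sum.inr q) = β q.1 (q.2 : ℕ) := rfl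
    have hx0ne : a (Sum.inr q) ≠ 0 := smul_ne_zero hq.2 (hβne q)
    have hvq : FF.v Q (a (Sum.inr q)) = e - f (Sum.inr q) := by
      show FF.v Q (c (Sum.inr q) • W (Sum.inr q)) = _
      rw [hWq, FF.v_smul' Q _ hq.2 _ (hβne q), hβq, hval _ hjm1]
    refine absurd hsum (FF.sum_ne_zero' Q t a (Sum.inr q) hx₀t hx0ne ?_)
    intro x hxt hxne hax
    rw [hvq]
    have hcx : c x ≠ 0 := fun h => hax (by show c x • W x = 0; rw [h, zero_smul])
    have hWx : W x ≠ 0 := fun h => hax (by show c x • W x = 0; rw [h, smul_zero])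
    have hvax : FF.v Q (a x) = FF.v Q (W x) := FF.v_smul' Q _ hcx _ hWx
    rw [hvax]
    cases x with
    | inl f₀ =>
      have hWf : W (Sum.inl f₀) = w f₀ := rfl
      rw [hWf]
      have := hw f₀
      omega
    | inr p' =>
      have hWp : W (Sum.inr p') = β p'.1 (p'.2 : ℕ) := rfl
      rw [hWp]
      by_cases hp'1 : p'.1 = i
      · have hle : (p'.2 : ℕ) ≤ f (Sum.inr q) := by
          have hfp' : f (Sum.inr p') = (p'.2 : ℕ) := by rw [hfr]; exact if_pos ⟨hp'1, hcx⟩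
          rw [← hfp']
          exact hmax _ hxt
        have hlt : (p'.2 : ℕ) < f (Sum.inr q) := by
          rcases lt_or_eq_of_le hle with h | h
          · exact h
          · exfalso
            apply hxne
            have hq2' : (p'.2 : ℕ) = (q.2 : ℕ) := by rw [h, ← hq2]
            congr 1
            obtain ⟨p1, p2⟩ := p'
            obtain ⟨q1, q2⟩ := q
            simp only at hp'1 hq hq2'
            ext
            · rw [hp'1, hq.1]
            · exact hq2'
        have hv' : β p'.1 (p'.2 : ℕ) = β i (p'.2 : ℕ) := by rw [hp'1]
        rw [hv', hval (p'.2 : ℕ) p'.2.2]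
        omega
      · have := hβo p' hp'1
        omega
  have hz : ∀ p : Fin s × {j : ℕ // 1 ≤ j}, Sum.inr p ∈ t → c (Sum.inr p) = 0 := by
    intro p hpt
    by_cases hp0 : p.1 = 0
    · exact main 0 (P 0) (1 - D (P 0))
        (fun j hj => (hβ0 j hj).2)
        hw1 (fun p' hp' => hβlow0 p' hp') p hp0 hpt
    · exact main p.1 (P p.1) 0
        (fun j hj => by rw [(hβiv p.1 hp0 j hj).2]; ring)
        (hwi p.1 hp0) (fun p' hp' => hβlowi p.1 hp0 p' hp') p rfl hpt
  intro x hxt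
  cases x with
  | inr p => exact hz p hxt
  | inl f₀ =>
    have hleft : ∑ f₁ : Fin g, (if Sum.inl f₁ ∈ t then c (Sum.inl f₁) else 0) • w f₁ = 0 := by
      have h1 : ∑ f₁ : Fin g, (if Sum.inl f₁ ∈ t then c (Sum.inl f₁) else 0) • w f₁
          = ∑ f₁ ∈ Finset.univ.filter (fun f₁ : Fin g => Sum.inl f₁ ∈ t),
              c (Sum.inl f₁) • w f₁ := by
        rw [Finset.sum_filter]
        apply Finset.sum_congr rfl
        intro f₁ _
        split <;> simp
      have h2 : (Finset.univ.filter (fun f₁ : Fin g => Sum.inl f₁ ∈ t)).image Sum.inl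
          = t.filter (fun x => x.isLeft) := by
        ext x
        cases x <;> simp
      have h3 : ∑ f₁ ∈ Finset.univ.filter (fun f₁ : Fin g => Sum.inl f₁ ∈ t),
            c (Sum.inl f₁) • w f₁
          = ∑ x ∈ t.filter (fun x => x.isLeft),
              c x • Sum.elim w (fun p : Fin s × {j : ℕ // 1 ≤ j} => β p.1 (p.2 : ℕ)) x := by
        rw [← h2, Finset.sum_image (fun a _ b _ h => Sum.inl.inj h)]
        simp
      have h4 : ∑ x ∈ t.filter (fun x => x.isLeft),
            c x • Sum.elim w (fun p : Fin s × {j : ℕ // 1 ≤ j} => β p.1 (p.2 : ℕ)) x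
          = ∑ x ∈ t,
              c x • Sum.elim w (fun p : Fin s × {j : ℕ // 1 ≤ j} => β p.1 (p.2 : ℕ)) x := by
        apply Finset.sum_filter_of_ne
        intro x hx hne0
        cases x with
        | inl => rfl
        | inr p => exfalso; exact hne0 (by rw [hz p hx, zero_smul])
      rw [h1, h3, h4, hsum]
    have := linearIndependent_iff'.mp hwli Finset.univ
      (fun f₁ => if Sum.inl f₁ ∈ t then c (Sum.inl f₁) else 0) hleft f₀ (Finset.mem_univ _)
    simpa [hxt] using this
end

section
/- (Theorem 2, core rank statement) Let F be a global function field of genus g > 0 over F_q, P₁, …, P_s distinct rational places, P_∞ a further place of degree μ, and D a positive divisor with deg D = 2g and supp(D) ∩ {P_∞, P₂, …, P_s} = ∅. Let β_j^{(i)} be chosen as in Lemma 3. Suppose ℓ ∈ ℕ with ℓμ > 2g, d₁, …, d_s ∈ ℕ₀ with 1 ≤ d₁ + ⋯ + d_s ≤ ℓμ − 2g, and b_j^{(i)} ∈ F_q are such that β := Σ_{i=1}^s Σ_{j=1}^{d_i} b_j^{(i)} β_j^{(i)} satisfies ν_{P_∞}(β) ≥ ℓ. Then all b_j^{(i)} =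 0. -/
open scoped BigOperators

namespace FFPlaces

section MyHelpers

variable {K F : Type*} [Field K] [Field F] [Algebra K F] (FF : FFPlaces K F)

lemma my_mem_RR {E : FF.Place →₀ ℤ} {x : F} :
    x ∈ FF.RR E ↔ (x = 0 ∨ ∀ P, -(E P) ≤ FF.v P x) := Iff.rfl

lemma my_v_neg (P : FF.Place) {x : F} (hx : x ≠ 0) : FF.v P (-x) = FF.v P x := by
  have h1 : (-x) = algebraMap K F (-1) * x := by simp
  rw [h1, FF.v_mul P _ x (by simp) hx, FF.v_algebraMap P (-1) (by norm_num), zero_add]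

lemma my_v_smul (P : FF.Place) {c : K} {x : F} (hc : c ≠ 0) (hx : x ≠ 0) :
    FF.v P (c • x) = FF.v P x := by
  have halg : algebraMap K F c ≠ 0 :=
    (map_ne_zero_iff (algebraMap K F) (RingHom.injective _)).mpr hc
  rw [Algebra.smul_def, FF.v_mul P _ x halg hx, FF.v_algebraMap P c hc, zero_add]

lemma my_v_add_lt (P : FF.Place) {x y : F} (hx : x ≠ 0) (hy : y ≠ 0)
    (h : FF.v P x < FF.v P y) : x + y ≠ 0 ∧ FF.v P (x + y) = FF.v P x := by
  have hne : x + y ≠ 0 := by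
    intro h0
    have hyx : y = -x := by linear_combination h0
    rw [hyx, FF.my_v_neg P hx] at h
    exact lt_irrefl _ h
  refine ⟨hne, ?_⟩
  have le1 : FF.v P x ≤ FF.v P (x + y) := by
    have := FF.v_add P x y hx hy hne
    omega
  have le2 : min (FF.v P (x + y)) (FF.v P (-y)) ≤ FF.v P x := by
    have hx' : (x + y) + (-y) = x := by ring
    have := FF.v_add P (x + y) (-y) hne (neg_ne_zero.mpr hy) (by rw [hx']; exact hx)
    rw [hx'] at this
    exact this
  rw [FF.my_v_neg P hy] at le2
  omega

lemma my_sum_distinct_val {ι : Type*} (Pl : FF.Place) (w : ι → ℤ) (f : ι → F)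
    (t : Finset ι) (hne : t.Nonempty) (hf : ∀ k ∈ t, f k ≠ 0)
    (hv : ∀ k ∈ t, FF.v Pl (f k) = w k)
    (hinj : ∀ k ∈ t, ∀ k' ∈ t, k ≠ k' → w k ≠ w k') :
    (∑ k ∈ t, f k) ≠ 0 ∧
      ∃ k ∈ t, FF.v Pl (∑ k ∈ t, f k) = w k ∧ ∀ k' ∈ t, w k ≤ w k' := by
  classical
  induction t using Finset.strongInduction with
  | _ t ih =>
    obtain ⟨k₀, hk₀, hmin⟩ := Finset.exists_min_image t w hne
    have hsum : ∑ k ∈ t, f k = f k₀ + ∑ k ∈ t.erase k₀, f k :=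
      (Finset.add_sum_erase _ _ hk₀).symm
    by_cases he : (t.erase k₀).Nonempty
    · obtain ⟨h1, k₁, hk₁, h2, h3⟩ := ih (t.erase k₀) (Finset.erase_ssubset hk₀) he
        (fun k hk => hf k (Finset.mem_of_mem_erase hk))
        (fun k hk => hv k (Finset.mem_of_mem_erase hk))
        (fun k hk k' hk' => hinj k (Finset.mem_of_mem_erase hk) k' (Finset.mem_of_mem_erase hk'))
      have hk₁t : k₁ ∈ t := Finset.mem_of_mem_erase hk₁
      have hk₁ne : k₀ ≠ k₁ := fun h => (Finset.ne_of_mem_erase hk₁) h.symm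
      have hlt : w k₀ < w k₁ :=
        lt_of_le_of_ne (hmin k₁ hk₁t) (hinj k₀ hk₀ k₁ hk₁t hk₁ne)
      have hx := FF.my_v_add_lt Pl (hf k₀ hk₀) h1 (by rw [hv k₀ hk₀, h2]; exact hlt)
      rw [hsum]
      exact ⟨hx.1, k₀, hk₀, by rw [hx.2, hv k₀ hk₀], hmin⟩
    · have ht : t = {k₀} := by
        rw [Finset.not_nonempty_iff_eq_empty] at he
        apply Finset.eq_singleton_iff_unique_mem.mpr
        refine ⟨hk₀, fun x hx => ?_⟩
        by_contra hxk
        exact Finset.notMem_empty x (he ▸ Finset.mem_erase.mpr ⟨hxk, hx⟩)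
      subst ht
      rw [Finset.sum_singleton]
      exact ⟨hf k₀ hk₀, k₀, hk₀, hv k₀ hk₀, hmin⟩

lemma my_sum_val_ge {ι : Type*} (Pl : FF.Place) (c : ℤ) (t : Finset ι) (f : ι → F)
    (h : ∀ k ∈ t, f k = 0 ∨ c ≤ FF.v Pl (f k)) :
    (∑ k ∈ t, f k) = 0 ∨ c ≤ FF.v Pl (∑ k ∈ t, f k) := by
  classical
  induction t using Finset.cons_induction with
  | empty => simp
  | cons a t ha ih =>
    rw [Finset.sum_cons]
    have hrest := ih (fun k hk => h k (Finset.mem_cons_of_mem hk))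
    have hhead := h a (Finset.mem_cons_self a t)
    rcases hhead with h0 | hva
    · rw [h0, zero_add]; exact hrest
    rcases hrest with h0 | hvs
    · rw [h0, add_zero]; right; exact hva
    by_cases ha0 : f a = 0
    · rw [ha0, zero_add]; right; exact hvs
    by_cases hs0 : ∑ k ∈ t, f k = 0
    · rw [hs0, add_zero]; right; exact hva
    by_cases hsum0 : f a + ∑ k ∈ t, f k = 0
    · left; exact hsum0
    right
    have := FF.v_add Pl (f a) (∑ k ∈ t, f k) ha0 hs0 hsum0
    omega

lemma my_RR_mono {E E' : FF.Place →₀ ℤ} (h : ∀ Q, E Q ≤ E' Q) : FF.RR E ≤ FF.RR E' := by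
  intro x hx
  rcases (FF.my_mem_RR).mp hx with h0 | hb
  · exact (FF.my_mem_RR).mpr (Or.inl h0)
  · exact (FF.my_mem_RR).mpr (Or.inr fun Q => le_trans (neg_le_neg (h Q)) (hb Q))

lemma my_degD_sum (E : FF.Place →₀ ℤ) :
    FF.degD E = E.sum (fun P n => (FF.deg P : ℤ) * n) := rfl

lemma my_degD_add (A B : FF.Place →₀ ℤ) : FF.degD (A + B) = FF.degD A + FF.degD B := by
  rw [my_degD_sum, my_degD_sum, my_degD_sum]
  exact Finsupp.sum_add_index' (fun a => by simp) (fun a b₁ b₂ => by ring)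

lemma my_degD_single (Pl : FF.Place) (n : ℤ) :
    FF.degD (Finsupp.single Pl n) = (FF.deg Pl : ℤ) * n := by
  rw [my_degD_sum]
  exact Finsupp.sum_single_index (by simp)

lemma my_degD_neg (A : FF.Place →₀ ℤ) : FF.degD (-A) = -FF.degD A := by
  rw [my_degD_sum, my_degD_sum, Finsupp.sum_neg_index (fun a => by simp)]
  rw [← Finsupp.sum_neg]
  congr 1
  ext a n
  ring

lemma my_degD_sub (A B : FF.Place →₀ ℤ) : FF.degD (A - B) = FF.degD A - FF.degD B := by
  rw [sub_eq_add_neg, my_degD_add, my_degD_neg, sub_eq_add_neg]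

lemma my_degD_finset_sum {ι : Type*} (t : Finset ι) (g : ι → (FF.Place →₀ ℤ)) :
    FF.degD (∑ i ∈ t, g i) = ∑ i ∈ t, FF.degD (g i) := by
  classical
  induction t using Finset.cons_induction with
  | empty => simp [my_degD_sum]
  | cons a t ha ih => rw [Finset.sum_cons, Finset.sum_cons, my_degD_add, ih]

lemma my_degD_eq_finsum (E : FF.Place →₀ ℤ) :
    FF.degD E = ∑ᶠ Q, (FF.deg Q : ℤ) * E Q := by
  rw [finsum_eq_finset_sum_of_support_subset]
  · rfl
  · intro Q hQ
    simp only [Function.mem_support, ne_eq] at hQ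
    simp only [Finset.coe_sort_coe, Finset.mem_coe, Finsupp.mem_support_iff]
    intro h0
    exact hQ (by rw [h0, mul_zero])

lemma my_degD_nonneg_of_RR (E : FF.Place →₀ ℤ) (f : F) (hf : f ≠ 0)
    (hmem : ∀ Q, -(E Q) ≤ FF.v Q f) : 0 ≤ FF.degD E := by
  classical
  have hvfin := FF.finite_support f hf
  have hsupp1 : (Function.support fun Q => (FF.deg Q : ℤ) * FF.v Q f).Finite := by
    apply hvfin.subset
    intro Q hQ
    simp only [Function.mem_support, ne_eq] at hQ
    simp only [Set.mem_setOf_eq]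
    intro h0
    exact hQ (by rw [h0, mul_zero])
  have hsupp2 : (Function.support fun Q => (FF.deg Q : ℤ) * E Q).Finite := by
    apply (E.finite_support).subset
    intro Q hQ
    simp only [Function.mem_support, ne_eq] at hQ
    simp only [Finsupp.fun_support_eq, Finset.mem_coe, Finsupp.mem_support_iff]
    intro h0
    exact hQ (by rw [h0, mul_zero])
  have key : (∑ᶠ Q, ((FF.deg Q : ℤ) * FF.v Q f + (FF.deg Q : ℤ) * E Q))
      = (∑ᶠ Q, (FF.deg Q : ℤ) * FF.v Q f) + ∑ᶠ Q, (FF.deg Q : ℤ) * E Q :=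
    finsum_add_distrib hsupp1 hsupp2
  have hnn : 0 ≤ ∑ᶠ Q, ((FF.deg Q : ℤ) * FF.v Q f + (FF.deg Q : ℤ) * E Q) := by
    apply finsum_nonneg
    intro Q
    rw [← mul_add]
    apply mul_nonneg
    · exact_mod_cast Nat.zero_le _
    · have := hmem Q; omega
  rw [key, FF.degree_formula f hf, zero_add, ← my_degD_eq_finsum] at hnn
  exact hnn

end MyHelpers

end FFPlaces


open Finsupp in
/-- Theorem 2 of the paper (core rank statement). Let `F` be a global function field of
genus `g > 0` over `Fq` (Riemann–Roch recorded in `hRR`), `P 0, …, P (s-1)` distinct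
rational places (the paper's `P₁, …, P_s`), `Pinf` a further place of degree `μ`, and `D`
a positive divisor of degree `2g` with support avoiding `Pinf, P₂, …, P_s`. Choose
`β_j^{(i)}` as in Lemma 3. If `ℓμ > 2g`, `1 ≤ d₁ + ⋯ + d_s ≤ ℓμ - 2g`, and
`β = ∑_{i=1}^s ∑_{j=1}^{d_i} b_j^{(i)} β_j^{(i)}` satisfies `ν_{Pinf}(β) ≥ ℓ`
(with the convention `ν_{Pinf}(0) = ∞`), then all `b_j^{(i)} = 0`. -/
theorem theorem2_rank (Fq F : Type*) [Field Fq] [Fintype Fq] [Field F] [Algebra Fq F]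
    (FF : FFPlaces Fq F) (g : ℕ) (hg : 0 < g)
    (hRR : ∀ D : FF.Place →₀ ℤ, 2 * (g : ℤ) - 1 ≤ FF.degD D →
      (Module.finrank Fq (FF.RR D) : ℤ) = FF.degD D + 1 - g)
    (s : ℕ) [NeZero s] (hs2 : 2 ≤ s) (P : Fin s → FF.Place)
    (hP : Function.Injective P) (hPdeg : ∀ i, FF.deg (P i) = 1)
    (μ : ℕ) (hμ : 1 ≤ μ) (Pinf : FF.Place) (hPinfdeg : FF.deg Pinf = μ)
    (hPinfne : ∀ i, Pinf ≠ P i)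
    (D : FF.Place →₀ ℤ) (hDpos : ∀ Q, 0 ≤ D Q) (hdegD : FF.degD D = 2 * g)
    (hDsupp : ∀ i : Fin s, i ≠ 0 → D (P i) = 0) (hDsuppInf : D Pinf = 0)
    (β : Fin s → ℕ → F)
    (hβ1 : ∀ j : ℕ, 1 ≤ j →
      β 0 j ∈ FF.RR (D + single (P 0) ((j : ℤ) - 1) - single (P 1) ((j : ℤ) - 1)) ∧
      β 0 j ∉ FF.RR (D + single (P 0) ((j : ℤ) - 2) - single (P 1) ((j : ℤ) - 1)))
    (hβi : ∀ i : Fin s, i ≠ 0 → ∀ j : ℕ, 1 ≤ j →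
      β i j ∈ FF.RR (D + single (P i) (j : ℤ) - single (P 0) (j : ℤ)) ∧
      β i j ∉ FF.RR (D + single (P i) (j : ℤ) - single (P 0) ((j : ℤ) + 1)) ∧
      β i j ∉ FF.RR (D + single (P i) ((j : ℤ) - 1) - single (P 0) (j : ℤ)))
    (ℓ : ℕ) (hℓ : 2 * g < ℓ * μ) (d : Fin s → ℕ)
    (hd1 : 1 ≤ ∑ i, d i) (hd2 : ∑ i, d i ≤ ℓ * μ - 2 * g)
    (b : Fin s → ℕ → Fq)
    (hval : (∑ i, ∑ j ∈ Finset.Icc 1 (d i), b i j • β i j) = 0 ∨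
      (ℓ : ℤ) ≤ FF.v Pinf (∑ i, ∑ j ∈ Finset.Icc 1 (d i), b i j • β i j)) :
    ∀ (i : Fin s) (j : ℕ), 1 ≤ j → j ≤ d i → b i j = 0 := by
  classical
  have h01 : (0 : Fin s) ≠ 1 := by
    intro h
    have h' := congrArg Fin.val h
    rw [Fin.val_zero, Fin.val_one'] at h'
    rw [Nat.mod_eq_of_lt (by omega : 1 < s)] at h'
    omega
  have hinj' : ∀ i i' : Fin s, i ≠ i' → P i ≠ P i' := fun i i' h he => h (hP he)
  -- exact valuations from Lemma 3 (membership + non-membership)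
  have hfact0 : ∀ j : ℕ, 1 ≤ j →
      β 0 j ≠ 0 ∧ FF.v (P 0) (β 0 j) = -(D (P 0)) - (j : ℤ) + 1 := by
    intro j hj
    obtain ⟨hm, hn⟩ := hβ1 j hj
    have hne : β 0 j ≠ 0 := fun h0 => hn (h0 ▸ Submodule.zero_mem _)
    have hub := (FF.my_mem_RR.mp hm).resolve_left hne
    have hn' : ¬ ∀ Q, -((D + single (P 0) ((j:ℤ)-2) - single (P 1) ((j:ℤ)-1)) Q)
        ≤ FF.v Q (β 0 j) := fun h => hn (FF.my_mem_RR.mpr (Or.inr h))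
    push_neg at hn'
    obtain ⟨Q, hQ⟩ := hn'
    have hQ0 : Q = P 0 := by
      by_contra hQne
      have heq : (D + single (P 0) ((j:ℤ)-2) - single (P 1) ((j:ℤ)-1)) Q
          = (D + single (P 0) ((j:ℤ)-1) - single (P 1) ((j:ℤ)-1)) Q := by
        simp only [Finsupp.add_apply, Finsupp.sub_apply, Finsupp.single_apply,
          if_neg (fun h : P 0 = Q => hQne h.symm)]
      rw [heq] at hQ
      exact absurd (hub Q) (not_le.mpr hQ)
    subst hQ0
    have h10 : P 1 ≠ P 0 := hinj' 1 0 (Ne.symm h01)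
    have h1 := hub (P 0)
    simp only [Finsupp.add_apply, Finsupp.sub_apply, Finsupp.single_apply, h10,
      if_true, if_false, eq_self_iff_true] at h1 hQ
    exact ⟨hne, by omega⟩
  have hfacti : ∀ i : Fin s, i ≠ 0 → ∀ j : ℕ, 1 ≤ j →
      β i j ≠ 0 ∧ FF.v (P i) (β i j) = -(j : ℤ) := by
    intro i hi j hj
    obtain ⟨hm, -, hn⟩ := hβi i hi j hj
    have hne : β i j ≠ 0 := fun h0 => hn (h0 ▸ Submodule.zero_mem _)
    have hub := (FF.my_mem_RR.mp hm).resolve_left hne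
    have hn' : ¬ ∀ Q, -((D + single (P i) ((j:ℤ)-1) - single (P 0) (j:ℤ)) Q)
        ≤ FF.v Q (β i j) := fun h => hn (FF.my_mem_RR.mpr (Or.inr h))
    push_neg at hn'
    obtain ⟨Q, hQ⟩ := hn'
    have hQ0 : Q = P i := by
      by_contra hQne
      have heq : (D + single (P i) ((j:ℤ)-1) - single (P 0) (j:ℤ)) Q
          = (D + single (P i) (j:ℤ) - single (P 0) (j:ℤ)) Q := by
        simp only [Finsupp.add_apply, Finsupp.sub_apply, Finsupp.single_apply,
          if_neg (fun h : P i = Q => hQne h.symm)]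
      rw [heq] at hQ
      exact absurd (hub Q) (not_le.mpr hQ)
    subst hQ0
    have h0i : P 0 ≠ P i := hinj' 0 i (Ne.symm hi)
    have hD : D (P i) = 0 := hDsupp i hi
    have h1 := hub (P i)
    simp only [Finsupp.add_apply, Finsupp.sub_apply, Finsupp.single_apply, h0i,
      if_true, if_false, eq_self_iff_true, hD] at h1 hQ
    exact ⟨hne, by omega⟩
  -- the enveloping divisor E0
  set E0 : FF.Place →₀ ℤ :=
    D + ∑ i, Finsupp.single (P i) ((d i : ℤ) - if i = 0 then 1 else 0) with hE0def
  have hE0P : ∀ i0 : Fin s,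
      E0 (P i0) = D (P i0) + ((d i0 : ℤ) - if i0 = 0 then 1 else 0) := by
    intro i0
    rw [hE0def, Finsupp.add_apply, Finsupp.finset_sum_apply]
    congr 1
    rw [Finset.sum_eq_single i0 (fun i _ hne => by
        rw [Finsupp.single_apply, if_neg (hinj' i i0 hne)])
      (fun h => absurd (Finset.mem_univ i0) h)]
    rw [Finsupp.single_apply, if_pos rfl]
  have hE0off : ∀ Q, (∀ i, Q ≠ P i) → E0 Q = D Q := by
    intro Q hQ
    rw [hE0def, Finsupp.add_apply, Finsupp.finset_sum_apply, Finset.sum_eq_zero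
      (fun i _ => by rw [Finsupp.single_apply, if_neg (fun h => hQ i h.symm)]), add_zero]
  -- every β i j (with 1 ≤ j ≤ d i) lies in RR E0
  have hmemE0 : ∀ i : Fin s, ∀ j ∈ Finset.Icc 1 (d i), β i j ∈ FF.RR E0 := by
    intro i j hjmem
    rw [Finset.mem_Icc] at hjmem
    obtain ⟨hj1, hj2⟩ := hjmem
    by_cases hi : i = 0
    · subst hi
      refine FF.my_RR_mono ?_ (hβ1 j hj1).1
      intro Q
      rw [Finsupp.sub_apply, Finsupp.add_apply]
      by_cases hex : ∃ i', Q = P i'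
      · obtain ⟨i', rfl⟩ := hex
        rw [hE0P i']
        by_cases h0 : i' = 0
        · subst h0
          simp only [Finsupp.single_apply, hinj' 1 0 (Ne.symm h01), if_true, if_false,
            eq_self_iff_true]
          omega
        · by_cases h1 : i' = 1
          · subst h1
            simp only [Finsupp.single_apply, hinj' 0 1 h01, Ne.symm h01, if_true, if_false,
              eq_self_iff_true]
            omega
          · simp only [Finsupp.single_apply, hinj' 0 i' (Ne.symm h0),
              hinj' 1 i' (Ne.symm h1), h0, if_true, if_false, eq_self_iff_true]
            omega
      · push_neg at hex
        rw [hE0off _ hex, Finsupp.single_apply, Finsupp.single_apply,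
          if_neg (show ¬ P 0 = Q from fun h => hex 0 h.symm),
          if_neg (show ¬ P 1 = Q from fun h => hex 1 h.symm)]
        omega
    · refine FF.my_RR_mono ?_ (hβi i hi j hj1).1
      intro Q
      rw [Finsupp.sub_apply, Finsupp.add_apply]
      by_cases hex : ∃ i', Q = P i'
      · obtain ⟨i', rfl⟩ := hex
        rw [hE0P i']
        by_cases h0 : i' = 0
        · subst h0
          simp only [Finsupp.single_apply, hinj' i 0 hi, if_true, if_false,
            eq_self_iff_true]
          omega
        · by_cases hii' : i' = i
          · subst hii'
            simp only [Finsupp.single_apply, hinj' 0 i' (Ne.symm h0), h0, if_true,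
              if_false, eq_self_iff_true]
            omega
          · simp only [Finsupp.single_apply, hinj' i i' (fun h => hii' h.symm),
              hinj' 0 i' (Ne.symm h0), h0, if_true, if_false, eq_self_iff_true]
            omega
      · push_neg at hex
        rw [hE0off _ hex, Finsupp.single_apply, Finsupp.single_apply,
          if_neg (show ¬ P i = Q from fun h => hex i h.symm),
          if_neg (show ¬ P 0 = Q from fun h => hex 0 h.symm)]
        omega
  have hSmem : (∑ i, ∑ j ∈ Finset.Icc 1 (d i), b i j • β i j) ∈ FF.RR E0 :=
    Submodule.sum_mem _ fun i _ => Submodule.sum_mem _ fun j hj =>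
      Submodule.smul_mem _ _ (hmemE0 i j hj)
  -- the degree of E0 - ℓ Pinf is negative
  have hdegE : FF.degD (E0 - single Pinf (ℓ : ℤ)) ≤ -1 := by
    rw [FF.my_degD_sub, hE0def, FF.my_degD_add, FF.my_degD_finset_sum, hdegD,
      FF.my_degD_single, hPinfdeg]
    have hsum : (∑ i, FF.degD (Finsupp.single (P i) ((d i : ℤ) - if i = 0 then 1 else 0)))
        = (∑ i, (d i : ℤ)) - 1 := by
      rw [Finset.sum_congr rfl (fun i _ => by
        rw [FF.my_degD_single, hPdeg i, Nat.cast_one, one_mul])]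
      rw [Finset.sum_sub_distrib]
      congr 1
      simp
    rw [hsum]
    have h2g : 2 * g ≤ ℓ * μ := hℓ.le
    have hc := (Nat.cast_le (α := ℤ)).mpr hd2
    rw [Nat.cast_sub h2g] at hc
    push_cast at hc
    have hμℓ : (↑μ : ℤ) * ↑ℓ = ↑ℓ * ↑μ := mul_comm _ _
    linarith
  -- Part A : the sum is zero
  have hS0 : (∑ i, ∑ j ∈ Finset.Icc 1 (d i), b i j • β i j) = 0 := by
    rcases hval with h | h
    · exact h
    by_contra hSne
    have hub := (FF.my_mem_RR.mp hSmem).resolve_left hSne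
    have hmem' : ∀ Q, -((E0 - single Pinf (ℓ : ℤ)) Q)
        ≤ FF.v Q (∑ i, ∑ j ∈ Finset.Icc 1 (d i), b i j • β i j) := by
      intro Q
      rw [Finsupp.sub_apply]
      by_cases hQ : Q = Pinf
      · rw [hQ, Finsupp.single_apply, if_pos rfl, hE0off Pinf (fun i => hPinfne i),
          hDsuppInf]
        simpa using h
      · rw [Finsupp.single_apply, if_neg (fun hh => hQ hh.symm), sub_zero]
        exact hub Q
    have hnn := FF.my_degD_nonneg_of_RR (E0 - single Pinf (ℓ : ℤ)) _ hSne hmem'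
    omega
  -- Part B1 : coefficients for i ≠ 0 vanish
  have hB1 : ∀ i0 : Fin s, i0 ≠ 0 → ∀ j, 1 ≤ j → j ≤ d i0 → b i0 j = 0 := by
    intro i0 hi0
    by_contra hcon
    push_neg at hcon
    obtain ⟨j0, hj01, hj02, hbj0⟩ := hcon
    set T : Finset ℕ := (Finset.Icc 1 (d i0)).filter (fun k => b i0 k ≠ 0) with hT
    have hj0T : j0 ∈ T := by
      rw [hT, Finset.mem_filter, Finset.mem_Icc]
      exact ⟨⟨hj01, hj02⟩, hbj0⟩
    have hterm : ∀ k ∈ T, b i0 k • β i0 k ≠ 0 ∧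
        FF.v (P i0) (b i0 k • β i0 k) = -(k : ℤ) := by
      intro k hk
      rw [hT, Finset.mem_filter, Finset.mem_Icc] at hk
      obtain ⟨⟨hk1, hk2⟩, hbk⟩ := hk
      obtain ⟨hβne, hβv⟩ := hfacti i0 hi0 k hk1
      exact ⟨smul_ne_zero hbk hβne, by rw [FF.my_v_smul _ hbk hβne, hβv]⟩
    obtain ⟨hXne, kstar, hkT, hvX, hmin⟩ := FF.my_sum_distinct_val (P i0)
      (fun k : ℕ => -(k : ℤ)) (fun k : ℕ => b i0 k • β i0 k) T ⟨j0, hj0T⟩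
      (fun k hk => (hterm k hk).1) (fun k hk => (hterm k hk).2)
      (fun k _ k' _ hkk' h => hkk' (Nat.cast_inj.mp (neg_inj.mp h)))
    have hXeq : ∑ k ∈ Finset.Icc 1 (d i0), b i0 k • β i0 k
        = ∑ k ∈ T, b i0 k • β i0 k := by
      rw [hT]
      refine (Finset.sum_filter_of_ne ?_).symm
      intro k hk hne hb
      exact hne (by rw [hb, zero_smul])
    have hsplit := Finset.add_sum_erase Finset.univ
      (fun i => ∑ k ∈ Finset.Icc 1 (d i), b i k • β i k) (Finset.mem_univ i0)
    set Y := ∑ i ∈ Finset.univ.erase i0, ∑ k ∈ Finset.Icc 1 (d i), b i k • β i k with hYdef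
    have hXY : (∑ k ∈ T, b i0 k • β i0 k) + Y = 0 := by
      rw [← hXeq, hsplit]
      exact hS0
    have hYne : Y ≠ 0 := by
      intro h
      rw [h, add_zero] at hXY
      exact hXne hXY
    have hYX : Y = -(∑ k ∈ T, b i0 k • β i0 k) := by linear_combination hXY
    have hY0 : 0 ≤ FF.v (P i0) Y := by
      refine ((FF.my_sum_val_ge (P i0) 0 (Finset.univ.erase i0) _ ?_).resolve_left hYne)
      intro i hi
      have hii0 : i ≠ i0 := Finset.ne_of_mem_erase hi
      apply FF.my_sum_val_ge
      intro k hkmem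
      rw [Finset.mem_Icc] at hkmem
      by_cases hbk : b i k = 0
      · left; rw [hbk, zero_smul]
      by_cases hβ0 : β i k = 0
      · left; rw [hβ0, smul_zero]
      right
      rw [FF.my_v_smul _ hbk hβ0]
      have hD0 : D (P i0) = 0 := hDsupp i0 hi0
      by_cases hi00 : i = 0
      · subst hi00
        have hub := (FF.my_mem_RR.mp (hβ1 k hkmem.1).1).resolve_left hβ0
        have hb := hub (P i0)
        by_cases h1i0 : i0 = 1
        · subst h1i0
          simp only [Finsupp.add_apply, Finsupp.sub_apply, Finsupp.single_apply,
            hinj' 0 1 h01, if_true, if_false, eq_self_iff_true, hD0] at hb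
          omega
        · simp only [Finsupp.add_apply, Finsupp.sub_apply, Finsupp.single_apply,
            hinj' 0 i0 (Ne.symm hi0), hinj' 1 i0 (Ne.symm h1i0), if_false, hD0] at hb
          omega
      · have hub := (FF.my_mem_RR.mp (hβi i hi00 k hkmem.1).1).resolve_left hβ0
        have hb := hub (P i0)
        simp only [Finsupp.add_apply, Finsupp.sub_apply, Finsupp.single_apply,
          hinj' i i0 hii0, hinj' 0 i0 (Ne.symm hi0), if_false, hD0] at hb
        omega
    have hvY : FF.v (P i0) Y = -(kstar : ℤ) := by
      rw [hYX, FF.my_v_neg _ hXne, hvX]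
    have hk1 : 1 ≤ kstar := by
      have hmem := hkT
      rw [hT, Finset.mem_filter, Finset.mem_Icc] at hmem
      exact hmem.1.1
    omega
  -- Part B2 : coefficients for i = 0 vanish
  have hB2 : ∀ j, 1 ≤ j → j ≤ d 0 → b 0 j = 0 := by
    by_contra hcon
    push_neg at hcon
    obtain ⟨j0, hj01, hj02, hbj0⟩ := hcon
    set T : Finset ℕ := (Finset.Icc 1 (d 0)).filter (fun k => b 0 k ≠ 0) with hT
    have hj0T : j0 ∈ T := by
      rw [hT, Finset.mem_filter, Finset.mem_Icc]
      exact ⟨⟨hj01, hj02⟩, hbj0⟩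
    have hterm : ∀ k ∈ T, b 0 k • β 0 k ≠ 0 ∧
        FF.v (P 0) (b 0 k • β 0 k) = -(D (P 0)) - (k : ℤ) + 1 := by
      intro k hk
      rw [hT, Finset.mem_filter, Finset.mem_Icc] at hk
      obtain ⟨⟨hk1, hk2⟩, hbk⟩ := hk
      obtain ⟨hβne, hβv⟩ := hfact0 k hk1
      exact ⟨smul_ne_zero hbk hβne, by rw [FF.my_v_smul _ hbk hβne, hβv]⟩
    obtain ⟨hXne, -⟩ := FF.my_sum_distinct_val (P 0)
      (fun k : ℕ => -(D (P 0)) - (k : ℤ) + 1) (fun k : ℕ => b 0 k • β 0 k) T ⟨j0, hj0T⟩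
      (fun k hk => (hterm k hk).1) (fun k hk => (hterm k hk).2)
      (fun k _ k' _ hkk' h => hkk' (by
        have h' : -(D (P 0)) - (k : ℤ) + 1 = -(D (P 0)) - (k' : ℤ) + 1 := h
        omega))
    apply hXne
    have hXeq : ∑ k ∈ Finset.Icc 1 (d 0), b 0 k • β 0 k
        = ∑ k ∈ T, b 0 k • β 0 k := by
      rw [hT]
      refine (Finset.sum_filter_of_ne ?_).symm
      intro k hk hne hb
      exact hne (by rw [hb, zero_smul])
    have hzero : ∀ i ∈ Finset.univ.erase (0 : Fin s),
        ∑ k ∈ Finset.Icc 1 (d i), b i k • β i k = 0 := by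
      intro i hi
      apply Finset.sum_eq_zero
      intro k hk
      rw [Finset.mem_Icc] at hk
      rw [hB1 i (Finset.ne_of_mem_erase hi) k hk.1 hk.2, zero_smul]
    have hsplit : (∑ k ∈ Finset.Icc 1 (d 0), b 0 k • β 0 k)
        + ∑ i ∈ Finset.univ.erase (0 : Fin s), ∑ k ∈ Finset.Icc 1 (d i), b i k • β i k
        = ∑ i, ∑ k ∈ Finset.Icc 1 (d i), b i k • β i k :=
      by exact Finset.add_sum_erase Finset.univ
           (fun i => ∑ k ∈ Finset.Icc 1 (d i), b i k • β i k) (Finset.mem_univ (0 : Fin s))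
    rw [Finset.sum_eq_zero hzero, add_zero] at hsplit
    rw [← hXeq, hsplit]
    exact hS0
  intro i j hj1 hj2
  by_cases hi : i = 0
  · subst hi
    exact hB2 j hj1 hj2
  · exact hB1 i hi j hj1 hj2
end
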